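/- Let (γ_j)_{j∈ℕ} be nonnegative reals with T := ∑_{j=1}^∞ γ_j^{1/p} < 1 for some p > 0, and suppose Γ_k ≤ C (k!)^p for all k ∈ ℕ and some constant C > 0. For the POD weights γ_u = Γ_{|u|} ∏_{j∈u} γ_j, one has for every d ∈ ℕ: ∑_{u : d ∈ u ⊆ [d]} γ_u^{1/p} ≤ C^{1/p} (1 − T)^{−2} γ_d^{1/p}. -/

import Mathlib

open Finset

private lemma aux_pow (s t : ℝ) (hs : 0 ≤ s) (ht : 0 ≤ t) (n : ℕ) :
    s ^ (n + 1) + (n + 1 : ℝ) * t * s ^ n ≤ (s + t) ^ (n + 1) := by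
  induction n with
  | zero => simp
  | succ n ih =>
    have hst : (0:ℝ) ≤ s + t := by linarith
    have h := mul_le_mul_of_nonneg_left ih hst
    have e1 : (s + t) ^ (n + 2) = (s + t) * (s + t) ^ (n + 1) := by ring
    have expand : (s + t) * (s ^ (n + 1) + ((n:ℝ) + 1) * t * s ^ n)
        = s ^ (n + 2) + ((n:ℝ) + 2) * t * s ^ (n + 1) + ((n:ℝ) + 1) * t ^ 2 * s ^ n := by
      have e3 : s ^ (n + 2) = s * s ^ (n + 1) := by ring
      have e2 : s ^ (n + 1) = s * s ^ n := by ring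
      rw [e3, e2]; ring
    have hnn : (0:ℝ) ≤ ((n:ℝ) + 1) * t ^ 2 * s ^ n := by positivity
    have final : s ^ (n + 2) + ((n:ℝ) + 2) * t * s ^ (n + 1) ≤ (s + t) ^ (n + 2) := by
      rw [e1]; linarith
    have hn : n + 1 + 1 = n + 2 := by omega
    rw [hn]; push_cast; linarith

private lemma aux_esymm (x : ℕ → ℝ) (hx : ∀ j, 0 ≤ x j) (A : Finset ℕ) :
    ∀ k : ℕ, (k.factorial : ℝ) * ∑ s ∈ A.powersetCard k, ∏ j ∈ s, x j
      ≤ (∑ j ∈ A, x j) ^ k := by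
  induction A using Finset.induction_on with
  | empty =>
    intro k
    cases k with
    | zero => simp
    | succ k =>
      rw [Finset.powersetCard_eq_empty.2 (by simp)]
      simp
  | insert a A ha ih =>
    intro k
    cases k with
    | zero => simp
    | succ k =>
      have hS : 0 ≤ ∑ j ∈ A, x j := Finset.sum_nonneg fun j _ => hx j
      have hdisj : Disjoint (A.powersetCard (k + 1))
          ((A.powersetCard k).image (insert a)) := by
        rw [Finset.disjoint_left]
        intro s hs hs'
        obtain ⟨t, ht, rfl⟩ := Finset.mem_image.1 hs'
        have := (Finset.mem_powersetCard.1 hs).1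
        exact ha (this (Finset.mem_insert_self a t))
      have hinj : ∀ s ∈ A.powersetCard k, ∀ t ∈ A.powersetCard k,
          insert a s = insert a t → s = t := by
        intro s hs t ht hst
        have has : a ∉ s := fun h => ha ((Finset.mem_powersetCard.1 hs).1 h)
        have hat : a ∉ t := fun h => ha ((Finset.mem_powersetCard.1 ht).1 h)
        rw [← Finset.erase_insert has, hst, Finset.erase_insert hat]
      rw [Finset.powersetCard_succ_insert ha, Finset.sum_union hdisj,
        Finset.sum_image hinj, Finset.sum_insert ha]
      have himg : ∑ s ∈ A.powersetCard k, ∏ j ∈ insert a s, x j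
          = x a * ∑ s ∈ A.powersetCard k, ∏ j ∈ s, x j := by
        rw [Finset.mul_sum]
        refine Finset.sum_congr rfl fun s hs => ?_
        have has : a ∉ s := fun h => ha ((Finset.mem_powersetCard.1 hs).1 h)
        rw [Finset.prod_insert has]
      rw [himg]
      have h1 := ih (k + 1)
      have h2 := ih k
      have h2' : ((k:ℝ) + 1) * x a * ((k.factorial : ℝ) *
            ∑ s ∈ A.powersetCard k, ∏ j ∈ s, x j)
          ≤ ((k:ℝ) + 1) * x a * (∑ j ∈ A, x j) ^ k :=
        mul_le_mul_of_nonneg_left h2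
          (mul_nonneg (by positivity) (hx a))
      have key := aux_pow (∑ j ∈ A, x j) (x a) hS (hx a) k
      have hfac : ((k + 1).factorial : ℝ) = ((k:ℝ) + 1) * (k.factorial : ℝ) := by
        push_cast [Nat.factorial_succ]; ring
      rw [add_comm (x a) (∑ j ∈ A, x j)] at *
      calc ((k + 1).factorial : ℝ) * (∑ s ∈ A.powersetCard (k + 1), ∏ j ∈ s, x j
              + x a * ∑ s ∈ A.powersetCard k, ∏ j ∈ s, x j)
          = ((k + 1).factorial : ℝ) * ∑ s ∈ A.powersetCard (k + 1), ∏ j ∈ s, x j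
            + ((k:ℝ) + 1) * x a * ((k.factorial : ℝ) *
              ∑ s ∈ A.powersetCard k, ∏ j ∈ s, x j) := by rw [hfac]; ring
        _ ≤ (∑ j ∈ A, x j) ^ (k + 1) + ((k:ℝ) + 1) * x a * (∑ j ∈ A, x j) ^ k := by
            linarith
        _ ≤ (∑ j ∈ A, x j + x a) ^ (k + 1) := key

private lemma aux_geom_id (S : ℝ) (n : ℕ) :
    (1 - S) ^ 2 * ∑ k ∈ Finset.range n, ((k:ℝ) + 1) * S ^ k
      = 1 - ((n:ℝ) + 1) * S ^ n + (n:ℝ) * S ^ (n + 1) := by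
  induction n with
  | zero => simp
  | succ n ih =>
    rw [Finset.sum_range_succ, mul_add, ih]
    push_cast
    ring

private lemma aux_geom (S : ℝ) (hS0 : 0 ≤ S) (hS1 : S < 1) (n : ℕ) :
    ∑ k ∈ Finset.range n, ((k:ℝ) + 1) * S ^ k ≤ ((1 - S) ^ 2)⁻¹ := by
  have hS1' : (0:ℝ) < 1 - S := by linarith
  have hpos : (0:ℝ) < (1 - S) ^ 2 := by positivity
  have hbound : (1 - S) ^ 2 * ∑ k ∈ Finset.range n, ((k:ℝ) + 1) * S ^ k ≤ 1 := by
    rw [aux_geom_id]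
    have h1 : S ^ (n + 1) ≤ S ^ n := pow_le_pow_of_le_one hS0 (le_of_lt hS1) (by omega)
    have h2 : (0:ℝ) ≤ S ^ n := pow_nonneg hS0 n
    nlinarith
  rw [inv_eq_one_div, le_div_iff₀ hpos]
  linarith [hbound, mul_comm ((1 - S) ^ 2) (∑ k ∈ Finset.range n, ((k:ℝ) + 1) * S ^ k)]

/-- For POD weights `γ_u = Γ_{|u|} ∏_{j∈u} γ_j` with `T = ∑_j γ_j^{1/p} < 1`
and `Γ_k ≤ C (k!)^p`, one has for every `d ≥ 1`:
`∑_{u : d ∈ u ⊆ [d]} γ_u^{1/p} ≤ C^{1/p} (1-T)^{-2} γ_d^{1/p}`. -/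
theorem stmt_7 (γ : ℕ → ℝ) (Γ : ℕ → ℝ) (p C : ℝ)
    (hγ0 : ∀ j, 0 ≤ γ j) (hΓ0 : ∀ k, 0 ≤ Γ k)
    (hp : 0 < p) (hC : 0 < C)
    (hΓ : ∀ k : ℕ, Γ k ≤ C * (k.factorial : ℝ) ^ p)
    (hsum : Summable fun j : ℕ => γ j ^ (1 / p))
    (hT : (∑' j : ℕ, γ j ^ (1 / p)) < 1) :
    ∀ d : ℕ, 1 ≤ d →
      (∑ u ∈ (Finset.Icc 1 d).powerset.filter (fun u => d ∈ u),
          (Γ u.card * ∏ j ∈ u, γ j) ^ (1 / p)) ≤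
        C ^ (1 / p) * ((1 - ∑' j : ℕ, γ j ^ (1 / p)) ^ 2)⁻¹ * γ d ^ (1 / p) := by
  intro d hd
  set x : ℕ → ℝ := fun j => γ j ^ (1 / p) with hxdef
  have hx : ∀ j, 0 ≤ x j := fun j => Real.rpow_nonneg (hγ0 j) _
  set T : ℝ := ∑' j : ℕ, γ j ^ (1 / p) with hTdef
  have hT0 : 0 ≤ T := tsum_nonneg fun j => hx j
  set A : Finset ℕ := Finset.Icc 1 (d - 1) with hAdef
  set S : ℝ := ∑ j ∈ A, x j with hSdef
  have hS0 : 0 ≤ S := Finset.sum_nonneg fun j _ => hx j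
  have hST : S ≤ T := hsum.sum_le_tsum A (fun j _ => hx j)
  have hS1 : S < 1 := lt_of_le_of_lt hST hT
  have hp' : 0 ≤ 1 / p := by positivity
  -- term bound
  have hterm : ∀ u : Finset ℕ,
      (Γ u.card * ∏ j ∈ u, γ j) ^ (1 / p)
        ≤ C ^ (1 / p) * (u.card.factorial : ℝ) * ∏ j ∈ u, x j := by
    intro u
    have h0 : 0 ≤ ∏ j ∈ u, γ j := Finset.prod_nonneg fun j _ => hγ0 j
    have h1 : Γ u.card * ∏ j ∈ u, γ j
        ≤ C * (u.card.factorial : ℝ) ^ p * ∏ j ∈ u, γ j :=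
      mul_le_mul_of_nonneg_right (hΓ u.card) h0
    have h2 := Real.rpow_le_rpow (mul_nonneg (hΓ0 u.card) h0) h1 hp'
    refine h2.trans_eq ?_
    simp only [hxdef]
    rw [Real.mul_rpow (by positivity) h0, Real.mul_rpow (le_of_lt hC) (by positivity),
      ← Real.rpow_mul (Nat.cast_nonneg _), mul_one_div, div_self (ne_of_gt hp),
      Real.rpow_one, ← Real.finset_prod_rpow u γ (fun j _ => hγ0 j)]
  -- reindexing
  have hAe : (Finset.Icc 1 d).erase d = A := by
    ext j
    simp only [Finset.mem_erase, Finset.mem_Icc, hAdef]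
    omega
  have hdA : d ∉ A := by simp only [hAdef, Finset.mem_Icc, not_and, not_le]; omega
  have hreindex :
      ∑ u ∈ (Finset.Icc 1 d).powerset.filter (fun u => d ∈ u),
          C ^ (1 / p) * (u.card.factorial : ℝ) * ∏ j ∈ u, x j
        = ∑ s ∈ A.powerset,
          C ^ (1 / p) * ((s.card + 1).factorial : ℝ) * (x d * ∏ j ∈ s, x j) := by
    refine Finset.sum_nbij' (fun u => u.erase d) (fun s => insert d s) ?_ ?_ ?_ ?_ ?_
    · intro u hu
      rw [Finset.mem_filter, Finset.mem_powerset] at hu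
      rw [Finset.mem_powerset, ← hAe]
      exact Finset.erase_subset_erase d hu.1
    · intro s hs
      rw [Finset.mem_powerset] at hs
      rw [Finset.mem_filter, Finset.mem_powerset]
      refine ⟨Finset.insert_subset (by rw [Finset.mem_Icc]; omega)
        (hs.trans ?_), Finset.mem_insert_self d s⟩
      rw [← hAe]; exact Finset.erase_subset d _
    · intro u hu
      rw [Finset.mem_filter] at hu
      exact Finset.insert_erase hu.2
    · intro s hs
      rw [Finset.mem_powerset] at hs
      exact Finset.erase_insert fun h => hdA (hs h)
    · intro u hu
      rw [Finset.mem_filter] at hu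
      have hdu : d ∈ u := hu.2
      have hcard : u.card = (u.erase d).card + 1 := by
        have hc : 0 < u.card := Finset.card_pos.2 ⟨d, hdu⟩
        rw [Finset.card_erase_of_mem hdu]
        omega
      have hprod : ∏ j ∈ u, x j = x d * ∏ j ∈ u.erase d, x j :=
        (Finset.mul_prod_erase u x hdu).symm
      rw [hcard, hprod]
  -- the key combinatorial sum bound
  have hsum2 : ∑ s ∈ A.powerset, ((s.card + 1).factorial : ℝ) * ∏ j ∈ s, x j
      ≤ ((1 - S) ^ 2)⁻¹ := by
    rw [Finset.sum_powerset A (fun s => ((s.card + 1).factorial : ℝ) * ∏ j ∈ s, x j)]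
    calc ∑ k ∈ Finset.range (A.card + 1), ∑ s ∈ A.powersetCard k,
            ((s.card + 1).factorial : ℝ) * ∏ j ∈ s, x j
        ≤ ∑ k ∈ Finset.range (A.card + 1), ((k:ℝ) + 1) * S ^ k := by
          refine Finset.sum_le_sum fun k _ => ?_
          have hcongr : ∑ s ∈ A.powersetCard k,
              ((s.card + 1).factorial : ℝ) * ∏ j ∈ s, x j
              = ((k + 1).factorial : ℝ) * ∑ s ∈ A.powersetCard k, ∏ j ∈ s, x j := by
            rw [Finset.mul_sum]
            refine Finset.sum_congr rfl fun s hs => ?_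
            rw [(Finset.mem_powersetCard.1 hs).2]
          rw [hcongr]
          have hE := aux_esymm x hx A k
          have hfac : ((k + 1).factorial : ℝ) = ((k:ℝ) + 1) * (k.factorial : ℝ) := by
            push_cast [Nat.factorial_succ]; ring
          calc ((k + 1).factorial : ℝ) * ∑ s ∈ A.powersetCard k, ∏ j ∈ s, x j
              = ((k:ℝ) + 1) * ((k.factorial : ℝ) *
                  ∑ s ∈ A.powersetCard k, ∏ j ∈ s, x j) := by rw [hfac]; ring
            _ ≤ ((k:ℝ) + 1) * S ^ k :=
                mul_le_mul_of_nonneg_left hE (by positivity)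
      _ ≤ ((1 - S) ^ 2)⁻¹ := aux_geom S hS0 hS1 _
  -- put everything together
  have hCp : 0 ≤ C ^ (1 / p) := Real.rpow_nonneg (le_of_lt hC) _
  have hmono : ((1 - S) ^ 2)⁻¹ ≤ ((1 - T) ^ 2)⁻¹ := by
    have h1 : (0:ℝ) < (1 - T) ^ 2 := by nlinarith
    have h2 : (1 - T) ^ 2 ≤ (1 - S) ^ 2 := by nlinarith
    exact inv_anti₀ h1 h2
  calc (∑ u ∈ (Finset.Icc 1 d).powerset.filter (fun u => d ∈ u),
          (Γ u.card * ∏ j ∈ u, γ j) ^ (1 / p))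
      ≤ ∑ u ∈ (Finset.Icc 1 d).powerset.filter (fun u => d ∈ u),
          C ^ (1 / p) * (u.card.factorial : ℝ) * ∏ j ∈ u, x j :=
        Finset.sum_le_sum fun u _ => hterm u
    _ = ∑ s ∈ A.powerset,
          C ^ (1 / p) * ((s.card + 1).factorial : ℝ) * (x d * ∏ j ∈ s, x j) := hreindex
    _ = C ^ (1 / p) * x d * ∑ s ∈ A.powerset,
          ((s.card + 1).factorial : ℝ) * ∏ j ∈ s, x j := by
        rw [Finset.mul_sum]
        refine Finset.sum_congr rfl fun s _ => ?_
        ring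
    _ ≤ C ^ (1 / p) * x d * ((1 - S) ^ 2)⁻¹ :=
        mul_le_mul_of_nonneg_left hsum2 (mul_nonneg hCp (hx d))
    _ ≤ C ^ (1 / p) * x d * ((1 - T) ^ 2)⁻¹ :=
        mul_le_mul_of_nonneg_left hmono (mul_nonneg hCp (hx d))
    _ = C ^ (1 / p) * ((1 - T) ^ 2)⁻¹ * γ d ^ (1 / p) := by
        rw [hxdef]; ring
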